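/- Let u, v : ℝⁿ → ℝ ∪ {+∞} be lower semicontinuous convex functions with u ∧ v convex, and let x ∈ ℝⁿ with u(x) < v(x). Then ∂(u ∧ v)(x) = ∂u(x), and if v(x) < +∞, then ∂(u ∨ v)(x) = ∂v(x). -/

import Mathlib

open Filter Topology MeasureTheory
open scoped RealInnerProductSpace ENNReal Classical

noncomputable section

/-- Euclidean space ℝⁿ. -/
abbrev En (n : ℕ) := EuclideanSpace ℝ (Fin n)

/-- Convexity of an `EReal`-valued function, via convexity of its epigraph. -/
def ConvexFn {n : ℕ} (u : En n → EReal) : Prop :=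
  Convex ℝ {p : En n × ℝ | u p.1 ≤ (p.2 : EReal)}

/-- The subdifferential of `u` at `x`. -/
def subdiff {n : ℕ} (u : En n → EReal) (x : En n) : Set (En n) :=
  {y | ∀ z, u x + (⟪z - x, y⟫ : EReal) ≤ u z}

/-- The convex (Legendre–Fenchel) conjugate of `u`. -/
def conj {n : ℕ} (u : En n → EReal) (y : En n) : EReal :=
  ⨆ x, ((⟪x, y⟫ : EReal) - u x)

/-- Graph of the subdifferential map. -/
def sgraph {n : ℕ} (u : En n → EReal) : Set (En n × En n) :=
  {p | p.2 ∈ subdiff u p.1}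

/-- Parallel set `P_s(u, η)`. -/
def parallelSet {n : ℕ} (u : En n → EReal) (η : Set (En n × En n)) (s : ℝ) : Set (En n) :=
  {z | ∃ p ∈ η, p.2 ∈ subdiff u p.1 ∧ z = p.1 + s • p.2}

/-- Convex indicator function of a set. -/
def indFn {n : ℕ} (K : Set (En n)) (x : En n) : EReal :=
  if x ∈ K then 0 else ⊤

/-- Lipschitz regularization (Pasch–Hausdorff envelope) `reg_r u = (u* + I_{B_{1/r}})*`. -/
def regLip {n : ℕ} (u : En n → EReal) (r : ℝ) : En n → EReal :=
  conj (fun y => conj u y + indFn (Metric.closedBall (0 : En n) (1 / r)) y)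

/-- A real number weakly between an `EReal` and a strictly larger real. -/
lemma exists_real_between' {e : EReal} {s : ℝ} (h : e < (s : EReal)) :
    ∃ b : ℝ, e ≤ (b : EReal) ∧ b < s := by
  obtain ⟨c, h1, h2⟩ := EReal.exists_between_coe_real h
  exact ⟨c, h1.le, by exact_mod_cast h2⟩

/-- Segment bound from epigraph convexity. -/
lemma seg_bound {n : ℕ} {f : En n → EReal} (hf : ConvexFn f) {x z : En n} {a b : ℝ}
    (ha : f x ≤ (a : EReal)) (hb : f z ≤ (b : EReal)) {t : ℝ} (ht0 : 0 ≤ t) (ht1 : t ≤ 1) :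
    f (x + t • (z - x)) ≤ (((1 - t) * a + t * b : ℝ) : EReal) := by
  have h := hf (show ((x, a) : En n × ℝ) ∈ _ from ha) (show ((z, b) : En n × ℝ) ∈ _ from hb)
      (by linarith : (0:ℝ) ≤ 1 - t) ht0 (by ring)
  have e1 : ((1 - t) • ((x, a) : En n × ℝ) + t • ((z, b) : En n × ℝ)) =
      ((x + t • (z - x), (1 - t) * a + t * b) : En n × ℝ) := by
    refine Prod.ext ?_ ?_
    · show (1 - t) • x + t • z = x + t • (z - x)
      module
    · show (1 - t) • a + t • b = (1 - t) * a + t * b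
      simp [smul_eq_mul]
  rw [e1] at h
  exact h

/-- Key contradiction lemma using lower semicontinuity. -/
lemma key_lsc {n : ℕ} {v : En n → EReal} (hvl : LowerSemicontinuous v) {x z : En n} {a b : ℝ}
    (hav : (a : EReal) < v x)
    (h : ∀ t : ℝ, 0 < t → t ≤ 1 →
      v (x + t • (z - x)) ≤ (((1 - t) * a + t * b : ℝ) : EReal)) : False := by
  obtain ⟨c, hac, hcv⟩ := EReal.exists_between_coe_real hav
  have hpath : Continuous fun t : ℝ => x + t • (z - x) := by continuity
  have ht : Tendsto (fun t : ℝ => x + t • (z - x)) (𝓝 0) (𝓝 x) := by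
    have := hpath.tendsto 0
    simpa using this
  have h1 : ∀ᶠ t : ℝ in 𝓝 0, (c : EReal) < v (x + t • (z - x)) :=
    ht.eventually (hvl x c hcv)
  have hac' : a < c := by exact_mod_cast hac
  have h2 : ∀ᶠ t : ℝ in 𝓝 0, (1 - t) * a + t * b < c := by
    have hc : Tendsto (fun t : ℝ => (1 - t) * a + t * b) (𝓝 0) (𝓝 a) := by
      have hcont : Continuous fun t : ℝ => (1 - t) * a + t * b := by continuity
      have := hcont.tendsto 0
      simpa using this
    exact hc.eventually_lt_const hac'
  have h3 : ∀ᶠ t : ℝ in 𝓝 0, t < 1 := by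
    have : Tendsto (fun t : ℝ => t) (𝓝 0) (𝓝 0) := tendsto_id
    exact this.eventually_lt_const one_pos
  have hall := ((h1.and (h2.and h3)).filter_mono (nhdsWithin_le_nhds (s := Set.Ioi (0:ℝ)))).and
    self_mem_nhdsWithin
  obtain ⟨t, ⟨hv1, hv2, hv3⟩, ht0⟩ := hall.exists
  have ht0' : (0:ℝ) < t := ht0
  have hb1 := h t ht0' hv3.le
  have : (c : EReal) < (c : EReal) := by
    calc (c : EReal) < v (x + t • (z - x)) := hv1
    _ ≤ (((1 - t) * a + t * b : ℝ) : EReal) := hb1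
    _ < (c : EReal) := by exact_mod_cast hv2
  exact lt_irrefl _ this

theorem subdiff_of_lt (n : ℕ) (u v : En n → EReal)
    (hu : ConvexFn u) (hv : ConvexFn v)
    (hul : LowerSemicontinuous u) (hvl : LowerSemicontinuous v)
    (hmin : ConvexFn (fun x => u x ⊓ v x))
    (x : En n) (hlt : u x < v x) :
    subdiff (fun z => u z ⊓ v z) x = subdiff u x ∧
      (v x ≠ ⊤ → subdiff (fun z => u z ⊔ v z) x = subdiff v x) := by
  have hinfx : u x ⊓ v x = u x := inf_eq_left.2 hlt.le
  have hsupx : u x ⊔ v x = v x := sup_eq_right.2 hlt.le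
  constructor
  · ext y
    simp only [subdiff, Set.mem_setOf_eq]
    constructor
    · intro hy z
      have h := hy z
      rw [hinfx] at h
      exact h.trans inf_le_left
    · intro hy z
      rw [hinfx]
      refine le_inf (hy z) ?_
      by_contra hcon
      push_neg at hcon
      rcases eq_or_ne (u x) ⊥ with hbot | hbot
      · rw [hbot] at hcon
        simp at hcon
      obtain ⟨r, hr⟩ : ∃ r : ℝ, u x = (r : EReal) :=
        ⟨(u x).toReal, (EReal.coe_toReal (ne_top_of_lt hlt) hbot).symm⟩
      have hvz : v z < ((r + ⟪z - x, y⟫ : ℝ) : EReal) := by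
        rw [hr] at hcon
        convert hcon using 1
        exact EReal.coe_add _ _
      obtain ⟨b, hb1, hb2⟩ := exists_real_between' hvz
      refine key_lsc hvl (x := x) (z := z) (a := r) (b := b) (hr ▸ hlt) ?_
      intro t ht0 ht1
      have hm : (fun w => u w ⊓ v w) (x + t • (z - x)) ≤
          (((1 - t) * r + t * b : ℝ) : EReal) :=
        seg_bound hmin (by rw [hinfx, hr]) (le_trans inf_le_right hb1) ht0.le ht1
      have hu_lb := hy (x + t • (z - x))
      have hinner : ⟪x + t • (z - x) - x, y⟫ = t * ⟪z - x, y⟫ := by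
        rw [add_sub_cancel_left, real_inner_smul_left]
      rw [hinner, hr] at hu_lb
      have hlt2 : (1 - t) * r + t * b < r + t * ⟪z - x, y⟫ := by nlinarith
      have hub : (((1 - t) * r + t * b : ℝ) : EReal) < u (x + t • (z - x)) := by
        refine lt_of_lt_of_le ?_ hu_lb
        have : ((r : ℝ) : EReal) + ((t * ⟪z - x, y⟫ : ℝ) : EReal) =
            ((r + t * ⟪z - x, y⟫ : ℝ) : EReal) := by push_cast; rfl
        rw [this]
        exact_mod_cast hlt2
      rcases inf_le_iff.1 hm with h | h
      · exact absurd h (not_le.2 hub)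
      · exact h
  · intro hvt
    obtain ⟨s, hs⟩ : ∃ s : ℝ, v x = (s : EReal) :=
      ⟨(v x).toReal, (EReal.coe_toReal hvt (bot_le.trans_lt hlt).ne').symm⟩
    ext y
    simp only [subdiff, Set.mem_setOf_eq]
    constructor
    · intro hy z
      by_contra hcon
      push_neg at hcon
      rw [hs] at hcon
      have hvz : v z < ((s + ⟪z - x, y⟫ : ℝ) : EReal) := by
        convert hcon using 1
        exact EReal.coe_add _ _
      obtain ⟨b, hb1, hb2⟩ := exists_real_between' hvz
      have hus : u x < ((s : ℝ) : EReal) := hs ▸ hlt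
      obtain ⟨a, ha1, ha2⟩ := exists_real_between' hus
      refine key_lsc hvl (x := x) (z := z) (a := a) (b := b)
        (by rw [hs]; exact_mod_cast ha2) ?_
      intro t ht0 ht1
      have hvseg : v (x + t • (z - x)) ≤ (((1 - t) * s + t * b : ℝ) : EReal) :=
        seg_bound hv hs.le hb1 ht0.le ht1
      have hmax := hy (x + t • (z - x))
      have hinner : ⟪x + t • (z - x) - x, y⟫ = t * ⟪z - x, y⟫ := by
        rw [add_sub_cancel_left, real_inner_smul_left]
      rw [hinner, hsupx, hs] at hmax
      have hcoe : ((s : ℝ) : EReal) + ((t * ⟪z - x, y⟫ : ℝ) : EReal) =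
          ((s + t * ⟪z - x, y⟫ : ℝ) : EReal) := by push_cast; rfl
      rw [hcoe] at hmax
      have hlt3 : (1 - t) * s + t * b < s + t * ⟪z - x, y⟫ := by nlinarith
      have hvlt : v (x + t • (z - x)) < ((s + t * ⟪z - x, y⟫ : ℝ) : EReal) :=
        lt_of_le_of_lt hvseg (by exact_mod_cast hlt3)
      have hulb : ((s + t * ⟪z - x, y⟫ : ℝ) : EReal) ≤ u (x + t • (z - x)) := by
        rcases le_sup_iff.1 hmax with h | h
        · exact h
        · exact absurd h (not_le.2 hvlt)
      have hm : (fun w => u w ⊓ v w) (x + t • (z - x)) ≤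
          (((1 - t) * a + t * b : ℝ) : EReal) :=
        seg_bound hmin (le_trans inf_le_left ha1) (le_trans inf_le_right hb1) ht0.le ht1
      rcases inf_le_iff.1 hm with h | h
      · exfalso
        have hlt4 : (1 - t) * a + t * b < s + t * ⟪z - x, y⟫ := by nlinarith
        have : u (x + t • (z - x)) < ((s + t * ⟪z - x, y⟫ : ℝ) : EReal) :=
          lt_of_le_of_lt h (by exact_mod_cast hlt4)
        exact absurd hulb (not_le.2 this)
      · exact h
    · intro hy z
      rw [hsupx]
      exact (hy z).trans le_sup_right
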